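/- Let a₁, a₂, a₃, a₄, a₅ ≥ 0 be nonnegative reals (representing |M₂*|, |M₁*|, |M₂'*|, |M₁'*|, |M₂''*|) with total μ = a₁ + a₂ + a₃ + a₄ + a₅. Let c = 2 - √2. Suppose S₁ ≥ (a₁ + a₂/2 + a₃/2) + c(a₄ + a₅) and S₂ ≥ c(a₁ + a₂ + a₃). Then max(S₁, S₂) ≥ (4(5 - 2√2)/17)·μ. -/
import Mathlib


/-- Algebraic core of the 0.5109-approximation: for nonnegative reals
`a₁,…,a₅` with total `μ`, `c = 2 - √2`, and reals `S₁ ≥ (a₁ + a₂/2 + a₃/2) +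
c(a₄ + a₅)`, `S₂ ≥ c(a₁ + a₂ + a₃)`, we have `max S₁ S₂ ≥ (4(5-2√2)/17)·μ`. -/
theorem stmt8 (a₁ a₂ a₃ a₄ a₅ μ c S₁ S₂ : ℝ)
    (h1 : 0 ≤ a₁) (h2 : 0 ≤ a₂) (h3 : 0 ≤ a₃) (h4 : 0 ≤ a₄) (h5 : 0 ≤ a₅)
    (hμ : μ = a₁ + a₂ + a₃ + a₄ + a₅)
    (hc : c = 2 - Real.sqrt 2)
    (hS₁ : S₁ ≥ (a₁ + a₂ / 2 + a₃ / 2) + c * (a₄ + a₅))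
    (hS₂ : S₂ ≥ c * (a₁ + a₂ + a₃)) :
    max S₁ S₂ ≥ (4 * (5 - 2 * Real.sqrt 2) / 17) * μ := by
  set s := Real.sqrt 2 with hs
  have hs2 : s ^ 2 = 2 := Real.sq_sqrt (by norm_num)
  have hsl : 1 ≤ s := by nlinarith [Real.sqrt_nonneg 2]
  have hsu : s ≤ 3 / 2 := by nlinarith [Real.sqrt_nonneg 2]
  have hm1 : max S₁ S₂ ≥ S₁ := le_max_left _ _
  have hm2 : max S₁ S₂ ≥ S₂ := le_max_right _ _
  nlinarith [mul_nonneg h4 (sub_nonneg.2 hsl), mul_nonneg h5 (sub_nonneg.2 hsl),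
    mul_nonneg h1 (sub_nonneg.2 hsu), mul_nonneg h2 (sub_nonneg.2 hsu),
    mul_nonneg h3 (sub_nonneg.2 hsu), sq_nonneg (s - 1), sq_nonneg s]
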